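/- Let G be a finite abelian group, identify characters with group elements via a fixed isomorphism so that χ_j(i) are the character values, and let F = (1/√|G|) ∑_{i,j} χ_j(i) |j⟩⟨i| be the Fourier transform on ℂ^G. Then for any coset c₀ + H of a subgroup H ≤ G, F maps the coset state (1/√|H|) ∑_{h∈H} |c₀+h⟩ to (1/√|H^⊥|) ∑_{j∈H^⊥} χ_j(c₀) |j⟩. -/

import Mathlib

open scoped Classical

section Aux

variable {G : Type*} [AddCommGroup G] [Fintype G]

/-- Characters trivial on `H` biject with characters of `G ⧸ H`. -/
lemma aux_card_trivialOn (H : AddSubgroup G) :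
    Nat.card {ψ : AddChar G ℂ // ∀ h ∈ H, ψ h = 1} = Nat.card (AddChar (G ⧸ H) ℂ) := by
  let f : {ψ : AddChar G ℂ // ∀ h ∈ H, ψ h = 1} → AddChar (G ⧸ H) ℂ := fun ψ =>
    AddChar.toAddMonoidHomEquiv.symm
      (QuotientAddGroup.lift H (AddChar.toAddMonoidHomEquiv ψ.1)
        (fun h hh =>
          show Additive.ofMul (ψ.1 h) = Additive.ofMul (1 : ℂ) from
            congrArg _ (ψ.2 h hh)))
  have hval : ∀ ψ (g : G), f ψ ((g : G ⧸ H)) = ψ.1 g := fun ψ g => rfl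
  refine Nat.card_eq_of_bijective f ⟨?_, ?_⟩
  · intro ψ φ hpq
    refine Subtype.ext ?_
    ext g
    rw [← hval ψ g, ← hval φ g, hpq]
  · intro φ
    refine ⟨⟨φ.compAddMonoidHom (QuotientAddGroup.mk' H), fun h hh => ?_⟩, ?_⟩
    · show φ ((h : G ⧸ H)) = 1
      rw [(QuotientAddGroup.eq_zero_iff h).mpr hh]
      exact φ.map_zero_eq_one
    · ext x
      induction x using QuotientAddGroup.induction_on with
      | H g => exact hval _ g

end Aux

/-- The Fourier transform `F = (1/√|G|) ∑ χ_j(i) |j⟩⟨i|` maps the coset state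
`(1/√|H|) ∑_{h∈H} |c₀+h⟩` to `(1/√|H^⊥|) ∑_{j∈H^⊥} χ_j(c₀) |j⟩`. Here the
characters of the finite abelian group `G` are identified with group elements
via a perfect pairing `χ`. -/
theorem fourier_transform_coset_state
    {G : Type*} [AddCommGroup G] [Fintype G]
    (χ : G → AddChar G ℂ)
    (hmul : ∀ j₁ j₂ i : G, χ (j₁ + j₂) i = χ j₁ i * χ j₂ i)
    (hperf : ∀ j : G, j ≠ 0 → ∃ i : G, χ j i ≠ 1)
    (H : AddSubgroup G) (c₀ : G) :
    let ψ : G → ℂ := fun x =>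
      if x - c₀ ∈ H then (1 / Real.sqrt (Nat.card H) : ℂ) else 0
    let Hperp : Set G := {j : G | ∀ h ∈ H, χ j h = 1}
    ∀ j : G,
      ∑ i : G, (χ j i / Real.sqrt (Nat.card G)) * ψ i =
        if j ∈ Hperp then χ j c₀ / (Real.sqrt (Nat.card Hperp) : ℂ) else 0 := by
  intro ψ Hperp j
  classical
  -- χ values are nonzero
  have hne : ∀ a i : G, χ a i ≠ 0 := by
    intro a i h
    have h1 : χ a i * χ a (-i) = 1 := by
      rw [← AddChar.map_add_eq_mul, add_neg_cancel, AddChar.map_zero_eq_one]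
    rw [h, zero_mul] at h1
    exact zero_ne_one h1
  -- χ 0 is the trivial character
  have hzero : ∀ i : G, χ 0 i = 1 := by
    intro i
    have h := hmul 0 0 i
    rw [add_zero] at h
    exact mul_left_cancel₀ (hne 0 i) (by rw [← h, mul_one])
  -- χ is injective
  have hinj : Function.Injective χ := by
    intro a b hab
    by_contra hne'
    obtain ⟨i, hi⟩ := hperf (a - b) (sub_ne_zero.mpr hne')
    apply hi
    have h1 : χ (a - b) i * χ b i = χ a i := by
      rw [← hmul, sub_add_cancel]
    exact mul_right_cancel₀ (hne b i) (by rw [h1, hab, one_mul])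
  -- χ is bijective
  have hbij : Function.Bijective χ := by
    rw [Fintype.bijective_iff_injective_and_card]
    exact ⟨hinj, AddChar.card_eq.symm⟩
  -- cardinality of Hperp
  have hHperp_card : Nat.card Hperp = Nat.card (G ⧸ H) := by
    have h1 : Nat.card Hperp = Nat.card {ψ : AddChar G ℂ // ∀ h ∈ H, ψ h = 1} := by
      refine Nat.card_eq_of_bijective (fun x => ⟨χ x.1, fun h hh => x.2 h hh⟩) ⟨?_, ?_⟩
      · intro a b hab
        exact Subtype.ext (hinj (congrArg Subtype.val hab))
      · rintro ⟨φ, hφ⟩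
        obtain ⟨a, ha⟩ := hbij.2 φ
        exact ⟨⟨a, fun h hh => by rw [ha]; exact hφ h hh⟩, Subtype.ext ha⟩
    rw [h1, aux_card_trivialOn H, Nat.card_eq_fintype_card, AddChar.card_eq,
      Nat.card_eq_fintype_card]
  have hG_card : Nat.card G = Nat.card Hperp * Nat.card H := by
    rw [hHperp_card]
    exact AddSubgroup.card_eq_card_quotient_mul_card_addSubgroup H
  -- numbers
  set n : ℕ := Nat.card G
  set m : ℕ := Nat.card H
  set k : ℕ := Nat.card Hperp
  have hm : 0 < m := Nat.card_pos
  have hk : 0 < k :=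
    Nat.card_pos_iff.mpr ⟨⟨⟨0, fun h _ => hzero h⟩⟩, Subtype.finite⟩
  have hsm : (0:ℝ) < Real.sqrt m := Real.sqrt_pos.mpr (by exact_mod_cast hm)
  have hsk : (0:ℝ) < Real.sqrt k := Real.sqrt_pos.mpr (by exact_mod_cast hk)
  have hsn : Real.sqrt n = Real.sqrt k * Real.sqrt m := by
    rw [hG_card, Nat.cast_mul, Real.sqrt_mul (Nat.cast_nonneg _)]
  -- restricted character
  set ψH : AddChar H ℂ := (χ j).compAddMonoidHom H.subtype with hψH
  have hmem : j ∈ Hperp ↔ ψH = 0 := by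
    constructor
    · intro hj
      ext x
      obtain ⟨x, hx⟩ := x
      simpa [hψH] using hj x hx
    · intro h0 h hh
      have := congrArg (fun (c : AddChar H ℂ) => c ⟨h, hh⟩) h0
      simpa [hψH] using this
  -- compute the sum
  have key : ∑ i : G, (χ j i / Real.sqrt n) * ψ i
      = (1 / (Real.sqrt n : ℂ)) * (1 / (Real.sqrt m : ℂ)) *
        (χ j c₀ * ∑ h : H, ψH h) := by
    have step1 : ∀ i : G, (χ j i / Real.sqrt n) * ψ i
        = (1 / (Real.sqrt n : ℂ)) * (1 / (Real.sqrt m : ℂ)) *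
          (if i - c₀ ∈ H then χ j i else 0) := by
      intro i
      simp only [ψ]
      split_ifs <;> ring
    rw [Finset.sum_congr rfl (fun i _ => step1 i), ← Finset.mul_sum]
    congr 1
    calc ∑ i : G, (if i - c₀ ∈ H then χ j i else 0)
        = ∑ x : G, (if x ∈ H then χ j c₀ * χ j x else 0) := by
          rw [← Equiv.sum_comp (Equiv.addLeft c₀) (fun i => if i - c₀ ∈ H then χ j i else 0)]
          refine Finset.sum_congr rfl fun x _ => ?_
          simp only [Equiv.coe_addLeft, add_sub_cancel_left]
          split_ifs with h
          · rw [AddChar.map_add_eq_mul]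
          · rfl
      _ = χ j c₀ * ∑ x : G, (if x ∈ H then χ j x else 0) := by
          rw [Finset.mul_sum]
          exact Finset.sum_congr rfl fun x _ => by split_ifs <;> ring
      _ = χ j c₀ * ∑ h : H, ψH h := by
          congr 1
          rw [← Finset.sum_filter]
          exact Finset.sum_subtype _ (by simp) _
  rw [key, AddChar.sum_eq_ite ψH]
  by_cases hj : j ∈ Hperp
  · rw [if_pos hj, if_pos (hmem.mp hj)]
    have hmcard : (Fintype.card H : ℂ) = (m : ℂ) := by
      norm_cast
      exact Nat.card_eq_fintype_card.symm
    rw [hmcard]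
    have hsnC : ((Real.sqrt n : ℝ) : ℂ) = (Real.sqrt k : ℂ) * (Real.sqrt m : ℂ) := by
      exact_mod_cast hsn
    have hmC : ((Real.sqrt m : ℝ) : ℂ) * ((Real.sqrt m : ℝ) : ℂ) = (m : ℂ) := by
      rw [← Complex.ofReal_mul, Real.mul_self_sqrt (Nat.cast_nonneg _)]
      push_cast
      ring
    have h1 : ((Real.sqrt m : ℝ) : ℂ) ≠ 0 := Complex.ofReal_ne_zero.mpr (ne_of_gt hsm)
    have h2 : ((Real.sqrt k : ℝ) : ℂ) ≠ 0 := Complex.ofReal_ne_zero.mpr (ne_of_gt hsk)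
    rw [hsnC, ← hmC]
    field_simp
  · rw [if_neg hj, if_neg (fun h => hj (hmem.mpr h)), mul_zero, mul_zero]
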